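/- Consider the one-directional sequential design and the corresponding restriction of the DH relaxation: maximize ∑_{(j,i): j∈J, i∈I} φ²_{j,i}·y_{j,i} over x ∈ {0,1}^{E_I} and y ∈ [0,1]^{E_J} subject to y_{j,i} ≤ φ¹_{i,j}·x_{i,j} for every i∈I, j∈J, ∑_{j∈J} x_{i,j} ≤ K_i for every i∈I, and ∑_{i∈I} y_{j,i} ≤ K_j for every j∈J. Let (x*, y*) be an optimal solution of this program, and extend x* by zero on arcs from J. Then M²(x*) ≥ (1 − 1/e) · max{ M²(x) : x ∈ {0,1}^{E⃗}, x_{j,i} = 0 for all j∈J, ∑_{j∈J} x_{i,j} ≤ K_i for every i∈I }. -/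

import Mathlib

open scoped Classical
noncomputable section

/-- The set of directed arcs between the two sides `I` and `J`. -/
abbrev Arc (I J : Type*) := (I × J) ⊕ (J × I)

/-- Reversal of a directed arc. -/
def arcRev {I J : Type*} : Arc I J → Arc I J
  | Sum.inl (i, j) => Sum.inr (j, i)
  | Sum.inr (j, i) => Sum.inl (i, j)

/-- Source (tail) of a directed arc. -/
def arcSrc {I J : Type*} : Arc I J → I ⊕ J
  | Sum.inl (i, _) => Sum.inl i
  | Sum.inr (j, _) => Sum.inr j

/-- Out-degree of a user in a set of arcs. -/
def outdegX {I J : Type*} (X : Finset (Arc I J)) (l : I ⊕ J) : ℕ :=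
  (X.filter fun a => arcSrc a = l).card

/-- Number of displayed unordered pairs containing a given user. -/
def wdeg {I J : Type*} (W : Finset (I × J)) : I ⊕ J → ℕ
  | Sum.inl i => (W.filter fun e => e.1 = i).card
  | Sum.inr j => (W.filter fun e => e.2 = j).card

/-- `max { ∑_{x ∈ S} φ x : S ⊆ s, |S| ≤ K }`. -/
def bestSum {α : Type*} (s : Finset α) (K : ℕ) (φ : α → ℝ) : ℝ :=
  (s.powerset.filter fun S => S.card ≤ K).sup' ⟨∅, by simp⟩ fun S => ∑ x ∈ S, φ x

/-- Backlog of a user `i ∈ I` in a set of arcs `B`. -/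
def backlogI {I J : Type*} [Fintype J] (B : Finset (Arc I J)) (i : I) : Finset J :=
  Finset.univ.filter fun j => Sum.inr (j, i) ∈ B

/-- Backlog of a user `j ∈ J` in a set of arcs `B`. -/
def backlogJ {I J : Type*} [Fintype I] (B : Finset (Arc I J)) (j : J) : Finset I :=
  Finset.univ.filter fun i => Sum.inl (i, j) ∈ B

/-- The second-period (sequential) value function `f`. -/
def fval {I J : Type*} [Fintype I] [Fintype J] (φ2 : Arc I J → ℝ) (K : I ⊕ J → ℕ)
    (B : Finset (Arc I J)) : ℝ :=
  (∑ i : I, bestSum (backlogI B i) (K (Sum.inl i)) fun j => φ2 (Sum.inl (i, j))) +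
  ∑ j : J, bestSum (backlogJ B j) (K (Sum.inr j)) fun i => φ2 (Sum.inr (j, i))

/-- Probability that the realized backlog is exactly `B`, given displayed arcs `x`. -/
def probOf {I J : Type*} [Fintype I] [Fintype J] (φ1 : Arc I J → ℝ)
    (x : Finset (Arc I J)) (B : Finset (Arc I J)) : ℝ :=
  (∏ a ∈ B, (if a ∈ x then φ1 a else 0)) *
    ∏ a ∈ Bᶜ, (1 - if a ∈ x then φ1 a else 0)

/-- Expected number of second-period (sequential) matches. -/
def M2 {I J : Type*} [Fintype I] [Fintype J] (φ1 φ2 : Arc I J → ℝ) (K : I ⊕ J → ℕ)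
    (x : Finset (Arc I J)) : ℝ :=
  ∑ B : Finset (Arc I J), fval φ2 K B * probOf φ1 x B

/-- Product Bernoulli weight of a subset. -/
def Pw {α : Type*} [Fintype α] (p : α → ℝ) (B : Finset α) : ℝ :=
  (∏ a ∈ B, p a) * ∏ a ∈ Bᶜ, (1 - p a)

lemma Pw_nonneg {α : Type*} [Fintype α] (p : α → ℝ) (hp : ∀ a, 0 ≤ p a ∧ p a ≤ 1)
    (B : Finset α) : 0 ≤ Pw p B :=
  mul_nonneg (Finset.prod_nonneg fun a _ => (hp a).1)
    (Finset.prod_nonneg fun a _ => by linarith [(hp a).2])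

lemma expectE {α : Type*} [Fintype α] (p X Y : α → ℝ) :
    ∑ B : Finset α, Pw p B * ∏ a : α, (if a ∈ B then X a else Y a)
      = ∏ a : α, (p a * X a + (1 - p a) * Y a) := by
  rw [Finset.prod_add, Finset.powerset_univ]
  refine Finset.sum_congr rfl fun B _ => ?_
  have h1 : ∏ a : α, (if a ∈ B then X a else Y a)
      = (∏ a ∈ B, X a) * ∏ a ∈ Finset.univ \ B, Y a := by
    rw [← Finset.prod_sdiff (Finset.subset_univ B), mul_comm]
    congr 1
    · exact Finset.prod_congr rfl fun a ha => if_pos ha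
    · exact Finset.prod_congr rfl fun a ha => if_neg (Finset.mem_sdiff.mp ha).2
  rw [h1]
  simp only [Pw, Finset.compl_eq_univ_sdiff]
  rw [Finset.prod_mul_distrib, Finset.prod_mul_distrib]
  ring

lemma sum_Pw {α : Type*} [Fintype α] (p : α → ℝ) : ∑ B : Finset α, Pw p B = 1 := by
  have h := expectE p (fun _ => 1) (fun _ => 1)
  simp only [ite_self, Finset.prod_const_one, mul_one] at h
  rw [h]
  exact Finset.prod_eq_one fun a _ => by ring

lemma marginal {α : Type*} [Fintype α] (p : α → ℝ) (a₀ : α) :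
    ∑ B : Finset α, Pw p B * (if a₀ ∈ B then (1:ℝ) else 0) = p a₀ := by
  have h := expectE p (fun _ => 1) (fun a => if a = a₀ then 0 else 1)
  have h2 : ∀ B : Finset α,
      (∏ a : α, (if a ∈ B then (1:ℝ) else if a = a₀ then 0 else 1))
        = (if a₀ ∈ B then (1:ℝ) else 0) := by
    intro B
    by_cases hB : a₀ ∈ B
    · rw [if_pos hB]
      refine Finset.prod_eq_one fun a _ => ?_
      by_cases h1 : a ∈ B
      · rw [if_pos h1]
      · rw [if_neg h1, if_neg (by rintro rfl; exact h1 hB)]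
    · rw [if_neg hB]
      refine Finset.prod_eq_zero (Finset.mem_univ a₀) ?_
      rw [if_neg hB, if_pos rfl]
  calc ∑ B : Finset α, Pw p B * (if a₀ ∈ B then (1:ℝ) else 0)
      = ∑ B : Finset α, Pw p B * ∏ a : α, (if a ∈ B then (1:ℝ) else if a = a₀ then 0 else 1) :=
        Finset.sum_congr rfl fun B _ => by rw [h2 B]
    _ = ∏ a : α, (p a * 1 + (1 - p a) * (if a = a₀ then 0 else 1)) := h
    _ = ∏ a : α, (if a = a₀ then p a else 1) := by
        refine Finset.prod_congr rfl fun a _ => ?_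
        by_cases h3 : a = a₀
        · rw [if_pos h3, if_pos h3]; ring
        · rw [if_neg h3, if_neg h3]; ring
    _ = p a₀ := by rw [Finset.prod_ite_eq' Finset.univ a₀ p, if_pos (Finset.mem_univ a₀)]

lemma expect_pow {α : Type*} [Fintype α] (p : α → ℝ) (A : Finset α) (q : ℝ) :
    ∑ B : Finset α, Pw p B * q ^ (B ∩ A).card = ∏ a ∈ A, (1 - p a * (1 - q)) := by
  have h := expectE p (fun a => if a ∈ A then q else 1) (fun _ => 1)
  have h2 : ∀ B : Finset α,
      (∏ a : α, (if a ∈ B then (if a ∈ A then q else 1) else 1)) = q ^ (B ∩ A).card := by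
    intro B
    have he : ∀ a : α, (if a ∈ B then (if a ∈ A then q else 1) else 1)
        = (if a ∈ B ∩ A then q else 1) := by
      intro a
      by_cases h1 : a ∈ B <;> by_cases h4 : a ∈ A <;> simp [h1, h4, Finset.mem_inter]
    rw [Finset.prod_congr rfl fun a _ => he a, Finset.prod_ite_mem, Finset.univ_inter,
      Finset.prod_const]
  calc ∑ B : Finset α, Pw p B * q ^ (B ∩ A).card
      = ∑ B : Finset α, Pw p B * ∏ a : α, (if a ∈ B then (if a ∈ A then q else 1) else 1) :=
        Finset.sum_congr rfl fun B _ => by rw [h2 B]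
    _ = ∏ a : α, (p a * (if a ∈ A then q else 1) + (1 - p a) * 1) := h
    _ = ∏ a : α, (if a ∈ A then 1 - p a * (1 - q) else 1) := by
        refine Finset.prod_congr rfl fun a _ => ?_
        by_cases h3 : a ∈ A
        · rw [if_pos h3, if_pos h3]; ring
        · rw [if_neg h3, if_neg h3]; ring
    _ = ∏ a ∈ A, (1 - p a * (1 - q)) := by rw [Finset.prod_ite_mem, Finset.univ_inter]

lemma one_minus_exp (u : ℝ) (h0 : 0 ≤ u) (h1 : u ≤ 1) :
    (1 - (Real.exp 1)⁻¹) * u ≤ 1 - Real.exp (-u) := by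
  have h := convexOn_exp.2 (Set.mem_univ (0:ℝ)) (Set.mem_univ (-1:ℝ))
    (by linarith : (0:ℝ) ≤ 1 - u) h0 (by ring)
  rw [show (1-u) • (0:ℝ) + u • (-1:ℝ) = -u by simp only [smul_eq_mul]; ring] at h
  simp only [smul_eq_mul, Real.exp_zero, mul_one] at h
  rw [show Real.exp (-1:ℝ) = (Real.exp 1)⁻¹ from Real.exp_neg 1] at h
  nlinarith [h]

lemma min_ge_aux (K n : ℕ) (hK : 0 < K) :
    (K:ℝ) * (1 - (1 - 1/(K:ℝ)) ^ n) ≤ ((min n K : ℕ) : ℝ) := by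
  have hKR : (1:ℝ) ≤ (K:ℝ) := by exact_mod_cast hK
  have hK0 : (0:ℝ) < K := by linarith
  have hinv : 1/(K:ℝ) ≤ 1 := by rw [div_le_one hK0]; exact hKR
  have hq0 : (0:ℝ) ≤ 1 - 1/(K:ℝ) := by linarith
  rcases le_or_gt n K with h | h
  · have hmin : ((min n K : ℕ):ℝ) = n := by rw [min_eq_left h]
    rw [hmin]
    have h1 : 1 - (n:ℝ)/K ≤ (1 - 1/(K:ℝ))^n := by
      have h2 := one_add_mul_le_pow (a := -(1/(K:ℝ))) (by linarith) n
      calc 1 - (n:ℝ)/K = 1 + (n:ℝ) * (-(1/(K:ℝ))) := by ring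
        _ ≤ (1 + -(1/(K:ℝ)))^n := h2
        _ = (1 - 1/(K:ℝ))^n := by rw [← sub_eq_add_neg]
    have h3 := mul_le_mul_of_nonneg_left h1 (le_of_lt hK0)
    have h4 : (K:ℝ) * ((n:ℝ)/K) = n := by field_simp
    nlinarith
  · have hmin : ((min n K : ℕ):ℝ) = K := by rw [min_eq_right (le_of_lt h)]
    rw [hmin]
    nlinarith [pow_nonneg hq0 n]


lemma le_bestSum {β : Type*} (S : Finset β) (K : ℕ) (w : β → ℝ) (T : Finset β)
    (hT : T ⊆ S) (hc : T.card ≤ K) : ∑ b ∈ T, w b ≤ bestSum S K w :=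
  Finset.le_sup' (f := fun S' => ∑ x ∈ S', w x)
    (by rw [Finset.mem_filter, Finset.mem_powerset]; exact ⟨hT, hc⟩)

lemma bestSum_nonneg {β : Type*} (S : Finset β) (K : ℕ) (w : β → ℝ) : 0 ≤ bestSum S K w := by
  simpa using le_bestSum S K w ∅ (Finset.empty_subset S) (by simp)

lemma bestSum_exists {β : Type*} (S : Finset β) (K : ℕ) (w : β → ℝ) :
    ∃ T, T ⊆ S ∧ T.card ≤ K ∧ bestSum S K w = ∑ b ∈ T, w b := by
  obtain ⟨T, hT, hval⟩ := Finset.exists_mem_eq_sup'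
    (⟨∅, by simp⟩ : ((S.powerset.filter fun S' => S'.card ≤ K)).Nonempty)
    (fun S' => ∑ x ∈ S', w x)
  rw [Finset.mem_filter, Finset.mem_powerset] at hT
  exact ⟨T, hT.1, hT.2, hval⟩

lemma bestSum_empty {β : Type*} (K : ℕ) (w : β → ℝ) : bestSum (∅ : Finset β) K w = 0 := by
  refine le_antisymm ?_ (bestSum_nonneg _ _ _)
  refine Finset.sup'_le _ _ fun S hS => ?_
  rw [Finset.mem_filter, Finset.mem_powerset] at hS
  rw [Finset.subset_empty.mp hS.1]
  simp

lemma peel {β : Type*} (S A : Finset β) (K : ℕ) (w w' : β → ℝ) (c : ℝ) (hc : 0 ≤ c)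
    (hw' : ∀ b, 0 ≤ w' b) (hsupp : ∀ b, b ∉ A → w' b = 0)
    (hdec : ∀ b, w b = w' b + (if b ∈ A then c else 0)) :
    bestSum S K w' + c * ((min (S ∩ A).card K : ℕ) : ℝ) ≤ bestSum S K w := by
  classical
  obtain ⟨T, hTS, hTK, hTval⟩ := bestSum_exists S K w'
  set T₂ := T ∩ A with hT₂
  have hT2sum : ∑ b ∈ T₂, w' b = ∑ b ∈ T, w' b := by
    refine Finset.sum_subset Finset.inter_subset_left fun b hb hbn => ?_
    refine hsupp b fun hbA => hbn (Finset.mem_inter.mpr ⟨hb, hbA⟩)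
  set m := min (S ∩ A).card K with hm
  have hT2K : T₂.card ≤ K := le_trans (Finset.card_le_card Finset.inter_subset_left) hTK
  have hT2sub : T₂ ⊆ S ∩ A := Finset.inter_subset_inter hTS (Finset.Subset.refl A)
  have hn1 : max T₂.card m ≤ (S ∩ A).card :=
    max_le (Finset.card_le_card hT2sub) (min_le_left _ _)
  obtain ⟨U, hTU, hUSA, hUcard⟩ :=
    Finset.exists_subsuperset_card_eq hT2sub (le_max_left _ _) hn1
  have hUK : U.card ≤ K := by rw [hUcard]; exact max_le hT2K (min_le_right _ _)
  have hle := le_bestSum S K w U (hUSA.trans Finset.inter_subset_left) hUK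
  have hsplit : ∑ b ∈ U, w b = ∑ b ∈ U, w' b + c * U.card := by
    rw [Finset.sum_congr rfl fun b _ => hdec b, Finset.sum_add_distrib]
    congr 1
    rw [Finset.sum_congr rfl fun b hb => if_pos (Finset.mem_inter.mp (hUSA hb)).2,
      Finset.sum_const, nsmul_eq_mul]
    ring
  have hsum_mono : ∑ b ∈ T₂, w' b ≤ ∑ b ∈ U, w' b :=
    Finset.sum_le_sum_of_subset_of_nonneg hTU fun b _ _ => hw' b
  have hUm : (m:ℝ) ≤ U.card := by
    have : m ≤ U.card := hUcard ▸ le_max_right _ _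
    exact_mod_cast this
  calc bestSum S K w' + c * (m:ℝ) = ∑ b ∈ T₂, w' b + c * m := by rw [hTval, hT2sum]
    _ ≤ ∑ b ∈ U, w' b + c * U.card :=
        add_le_add hsum_mono (mul_le_mul_of_nonneg_left hUm hc)
    _ = ∑ b ∈ U, w b := hsplit.symm
    _ ≤ bestSum S K w := hle

lemma expect_min' {α β : Type*} [Fintype α] [Fintype β] (ι : β → α) (hι : Function.Injective ι)
    (p : α → ℝ) (hp : ∀ a, 0 ≤ p a ∧ p a ≤ 1) (A : Finset β) (K : ℕ) (y : β → ℝ)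
    (hy0 : ∀ b, 0 ≤ y b) (hyp : ∀ b, y b ≤ p (ι b)) (hs : ∑ b ∈ A, y b ≤ (K:ℝ)) :
    (1 - (Real.exp 1)⁻¹) * ∑ b ∈ A, y b ≤
      ∑ B : Finset α,
        Pw p B * ((min ((Finset.univ.filter fun b => ι b ∈ B) ∩ A).card K : ℕ) : ℝ) := by
  classical
  have hs0 : 0 ≤ ∑ b ∈ A, y b := Finset.sum_nonneg fun b _ => hy0 b
  rcases Nat.eq_zero_or_pos K with hK | hK
  · subst hK
    have hz : ∑ b ∈ A, y b = 0 := le_antisymm (by simpa using hs) hs0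
    simp [hz]
  have hKR : (1:ℝ) ≤ (K:ℝ) := by exact_mod_cast hK
  have hK0 : (0:ℝ) < K := by linarith
  set q : ℝ := 1 - 1/(K:ℝ) with hq
  have hcard : ∀ B : Finset α,
      ((Finset.univ.filter fun b => ι b ∈ B) ∩ A).card = (B ∩ A.image ι).card := by
    intro B
    rw [show B ∩ A.image ι = ((Finset.univ.filter fun b => ι b ∈ B) ∩ A).image ι from ?_,
      Finset.card_image_of_injective _ hι]
    ext a
    simp only [Finset.mem_inter, Finset.mem_image, Finset.mem_filter, Finset.mem_univ, true_and]
    constructor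
    · rintro ⟨haB, b, hbA, rfl⟩; exact ⟨b, ⟨haB, hbA⟩, rfl⟩
    · rintro ⟨b, ⟨hbB, hbA⟩, rfl⟩; exact ⟨hbB, b, hbA, rfl⟩
  have step1 : ∀ B : Finset α,
      (K:ℝ) * (1 - q ^ (B ∩ A.image ι).card) ≤
        ((min ((Finset.univ.filter fun b => ι b ∈ B) ∩ A).card K : ℕ) : ℝ) := by
    intro B
    rw [hcard B, hq]
    exact min_ge_aux K _ hK
  have hPw0 : ∀ B : Finset α, 0 ≤ Pw p B := fun B => Pw_nonneg p hp B
  have main1 : ∑ B : Finset α, Pw p B * ((K:ℝ) * (1 - q ^ (B ∩ A.image ι).card))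
      ≤ ∑ B : Finset α,
          Pw p B * ((min ((Finset.univ.filter fun b => ι b ∈ B) ∩ A).card K : ℕ) : ℝ) :=
    Finset.sum_le_sum fun B _ => mul_le_mul_of_nonneg_left (step1 B) (hPw0 B)
  have main2 : ∑ B : Finset α, Pw p B * ((K:ℝ) * (1 - q ^ (B ∩ A.image ι).card))
      = (K:ℝ) * (1 - ∑ B : Finset α, Pw p B * q ^ (B ∩ A.image ι).card) := by
    have he : ∀ B : Finset α, Pw p B * ((K:ℝ) * (1 - q ^ (B ∩ A.image ι).card))
        = (K:ℝ) * Pw p B - (K:ℝ) * (Pw p B * q ^ (B ∩ A.image ι).card) := fun B => by ring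
    rw [Finset.sum_congr rfl fun B _ => he B, Finset.sum_sub_distrib,
      ← Finset.mul_sum, ← Finset.mul_sum, sum_Pw]
    ring
  have hiden : ∑ B : Finset α, Pw p B * q ^ (B ∩ A.image ι).card
      = ∏ b ∈ A, (1 - p (ι b) * (1 - q)) := by
    rw [expect_pow p (A.image ι) q, Finset.prod_image fun b _ b' _ h => hι h]
  have hprod1 : ∏ b ∈ A, (1 - p (ι b) * (1 - q)) ≤ Real.exp (-((∑ b ∈ A, y b)/K)) := by
    have h1q : 1 - q = 1/(K:ℝ) := by rw [hq]; ring
    have e1 : ∏ b ∈ A, (1 - p (ι b) * (1 - q)) ≤ ∏ b ∈ A, (1 - y b * (1 - q)) := by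
      refine Finset.prod_le_prod (fun b _ => ?_) (fun b _ => ?_)
      · rw [h1q]
        have hpb := (hp (ι b)).2
        have hpb0 := (hp (ι b)).1
        have : p (ι b) * (1/(K:ℝ)) ≤ 1 * 1 := by
          apply mul_le_mul hpb (by rw [div_le_one hK0]; exact hKR) (by positivity) zero_le_one
        linarith
      · have := hyp b
        have h1q0 : (0:ℝ) ≤ 1 - q := by rw [h1q]; positivity
        nlinarith
    have e2 : ∏ b ∈ A, (1 - y b * (1 - q)) ≤ ∏ b ∈ A, Real.exp (-(y b * (1 - q))) := by
      refine Finset.prod_le_prod (fun b _ => ?_) (fun b _ => ?_)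
      · rw [h1q]
        have hyb := hy0 b
        have hyb1 : y b ≤ 1 := le_trans (hyp b) (hp (ι b)).2
        have : y b * (1/(K:ℝ)) ≤ 1 * 1 := by
          apply mul_le_mul hyb1 (by rw [div_le_one hK0]; exact hKR) (by positivity) zero_le_one
        linarith
      · have := Real.add_one_le_exp (-(y b * (1 - q)))
        linarith
    have e3 : ∏ b ∈ A, Real.exp (-(y b * (1 - q))) = Real.exp (-((∑ b ∈ A, y b)/K)) := by
      rw [← Real.exp_sum]
      congr 1
      rw [Finset.sum_neg_distrib, ← Finset.sum_mul, h1q]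
      field_simp
    linarith [e1, e2, e3.le, e3.ge]
  have hfin : (1 - (Real.exp 1)⁻¹) * ∑ b ∈ A, y b
      ≤ (K:ℝ) * (1 - ∑ B : Finset α, Pw p B * q ^ (B ∩ A.image ι).card) := by
    rw [hiden]
    set s := ∑ b ∈ A, y b with hsdef
    have hu0 : 0 ≤ s/K := by positivity
    have hu1 : s/K ≤ 1 := by rw [div_le_one hK0]; exact hs
    have h5 := one_minus_exp (s/K) hu0 hu1
    have h6 := mul_le_mul_of_nonneg_left h5 (le_of_lt hK0)
    have h7 : (K:ℝ) * ((1 - (Real.exp 1)⁻¹) * (s/K)) = (1 - (Real.exp 1)⁻¹) * s := by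
      field_simp
    have h8 : (K:ℝ) * (1 - Real.exp (-(s/K))) ≤
        (K:ℝ) * (1 - ∏ b ∈ A, (1 - p (ι b) * (1 - q))) := by
      apply mul_le_mul_of_nonneg_left _ (le_of_lt hK0)
      linarith [hprod1]
    linarith
  linarith [main1, main2.ge, main2.le, hfin]

lemma corr_gap {α β : Type*} [Fintype α] [Fintype β] (ι : β → α) (hι : Function.Injective ι)
    (p : α → ℝ) (hp : ∀ a, 0 ≤ p a ∧ p a ≤ 1) (K : ℕ) :
    ∀ (n : ℕ) (w : β → ℝ), (Finset.univ.filter fun b => w b ≠ 0).card ≤ n → (∀ b, 0 ≤ w b) →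
    ∀ (y : β → ℝ), (∀ b, 0 ≤ y b ∧ y b ≤ p (ι b)) → (∑ b, y b ≤ (K:ℝ)) →
    (1 - (Real.exp 1)⁻¹) * ∑ b, w b * y b ≤
      ∑ B : Finset α, Pw p B * bestSum (Finset.univ.filter fun b => ι b ∈ B) K w := by
  classical
  intro n
  induction n with
  | zero =>
    intro w hcard hw y hy hs
    have hz : ∀ b, w b = 0 := by
      intro b
      by_contra hb
      have hmem : b ∈ Finset.univ.filter fun b => w b ≠ 0 := by
        simp [hb]
      have := Finset.card_pos.mpr ⟨b, hmem⟩
      omega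
    have hL : ∑ b, w b * y b = 0 := Finset.sum_eq_zero fun b _ => by rw [hz b, zero_mul]
    rw [hL, mul_zero]
    exact Finset.sum_nonneg fun B _ =>
      mul_nonneg (Pw_nonneg p hp B) (bestSum_nonneg _ _ _)
  | succ n ih =>
    intro w hcard hw y hy hs
    set A := Finset.univ.filter fun b => w b ≠ 0 with hA
    by_cases hAe : A = ∅
    · have hz : ∀ b, w b = 0 := by
        intro b
        by_contra hb
        have hmem : b ∈ A := by simp [hA, hb]
        rw [hAe] at hmem
        exact absurd hmem (Finset.notMem_empty b)
      have hL : ∑ b, w b * y b = 0 := Finset.sum_eq_zero fun b _ => by rw [hz b, zero_mul]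
      rw [hL, mul_zero]
      exact Finset.sum_nonneg fun B _ =>
        mul_nonneg (Pw_nonneg p hp B) (bestSum_nonneg _ _ _)
    · obtain ⟨b₀, hb₀, hmin⟩ := Finset.exists_min_image A w (Finset.nonempty_of_ne_empty hAe)
      set c := w b₀ with hc
      have hb₀ne : w b₀ ≠ 0 := (Finset.mem_filter.mp hb₀).2
      have hc0 : 0 < c := lt_of_le_of_ne (hw b₀) (Ne.symm hb₀ne)
      set w' := fun b => if b ∈ A then w b - c else 0 with hw'def
      have hw' : ∀ b, 0 ≤ w' b := by
        intro b
        rw [hw'def]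
        by_cases hb : b ∈ A
        · simp only [if_pos hb]
          linarith [hmin b hb]
        · simp [hb]
      have hwA : ∀ b, b ∉ A → w b = 0 := by
        intro b hb
        by_contra hbw
        exact hb (by simp [hA, hbw])
      have hdec : ∀ b, w b = w' b + (if b ∈ A then c else 0) := by
        intro b
        rw [hw'def]
        by_cases hb : b ∈ A
        · simp only [if_pos hb]; ring
        · simp only [if_neg hb, hwA b hb]; ring
      have hsupp' : (Finset.univ.filter fun b => w' b ≠ 0) ⊆ A.erase b₀ := by
        intro b hb
        rw [Finset.mem_filter] at hb
        have hb' := hb.2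
        rw [hw'def] at hb'
        by_cases hbA : b ∈ A
        · simp only [if_pos hbA] at hb'
          refine Finset.mem_erase.mpr ⟨?_, hbA⟩
          rintro rfl
          exact hb' (by rw [hc]; ring)
        · simp [hbA] at hb'
      have hcard' : (Finset.univ.filter fun b => w' b ≠ 0).card ≤ n := by
        have h1 := Finset.card_le_card hsupp'
        have h2 : (A.erase b₀).card = A.card - 1 := Finset.card_erase_of_mem hb₀
        have h3 : 1 ≤ A.card := Finset.card_pos.mpr ⟨b₀, hb₀⟩
        omega
      have IH := ih w' hcard' hw' y hy hs
      have hsA : ∑ b ∈ A, y b ≤ (K:ℝ) :=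
        le_trans (Finset.sum_le_sum_of_subset_of_nonneg (Finset.subset_univ A)
          fun b _ _ => (hy b).1) hs
      have hmin' := expect_min' ι hι p hp A K y (fun b => (hy b).1) (fun b => (hy b).2) hsA
      have hpeel : ∀ B : Finset α,
          bestSum (Finset.univ.filter fun b => ι b ∈ B) K w'
            + c * ((min ((Finset.univ.filter fun b => ι b ∈ B) ∩ A).card K : ℕ) : ℝ)
          ≤ bestSum (Finset.univ.filter fun b => ι b ∈ B) K w := fun B =>
        peel _ A K w w' c (le_of_lt hc0) hw' (fun b hb => by rw [hw'def]; simp [hb]) hdec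
      have step : ∑ B : Finset α, Pw p B *
            (bestSum (Finset.univ.filter fun b => ι b ∈ B) K w'
              + c * ((min ((Finset.univ.filter fun b => ι b ∈ B) ∩ A).card K : ℕ) : ℝ))
          ≤ ∑ B : Finset α, Pw p B * bestSum (Finset.univ.filter fun b => ι b ∈ B) K w :=
        Finset.sum_le_sum fun B _ => mul_le_mul_of_nonneg_left (hpeel B) (Pw_nonneg p hp B)
      have expand : ∑ B : Finset α, Pw p B *
            (bestSum (Finset.univ.filter fun b => ι b ∈ B) K w'
              + c * ((min ((Finset.univ.filter fun b => ι b ∈ B) ∩ A).card K : ℕ) : ℝ))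
          = (∑ B : Finset α, Pw p B * bestSum (Finset.univ.filter fun b => ι b ∈ B) K w')
            + c * ∑ B : Finset α,
                Pw p B * ((min ((Finset.univ.filter fun b => ι b ∈ B) ∩ A).card K : ℕ) : ℝ) := by
        rw [Finset.mul_sum, ← Finset.sum_add_distrib]
        exact Finset.sum_congr rfl fun B _ => by ring
      have hwy : ∑ b, w b * y b = (∑ b, w' b * y b) + c * ∑ b ∈ A, y b := by
        have h1 : ∀ b, w b * y b = w' b * y b + (if b ∈ A then c * y b else 0) := by
          intro b
          rw [hdec b]
          by_cases hb : b ∈ A <;> simp [hb] <;> ring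
        rw [Finset.sum_congr rfl fun b _ => h1 b, Finset.sum_add_distrib]
        congr 1
        rw [Finset.sum_ite_mem, Finset.univ_inter, Finset.mul_sum]
      have h5' : c * ((1 - (Real.exp 1)⁻¹) * ∑ b ∈ A, y b)
          ≤ c * ∑ B : Finset α,
              Pw p B * ((min ((Finset.univ.filter fun b => ι b ∈ B) ∩ A).card K : ℕ) : ℝ) :=
        mul_le_mul_of_nonneg_left hmin' (le_of_lt hc0)
      calc (1 - (Real.exp 1)⁻¹) * ∑ b, w b * y b
          = (1 - (Real.exp 1)⁻¹) * ∑ b, w' b * y b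
            + c * ((1 - (Real.exp 1)⁻¹) * ∑ b ∈ A, y b) := by rw [hwy]; ring
        _ ≤ (∑ B : Finset α, Pw p B * bestSum (Finset.univ.filter fun b => ι b ∈ B) K w')
            + c * ∑ B : Finset α,
                Pw p B * ((min ((Finset.univ.filter fun b => ι b ∈ B) ∩ A).card K : ℕ) : ℝ) :=
            add_le_add IH h5'
        _ = ∑ B : Finset α, Pw p B *
              (bestSum (Finset.univ.filter fun b => ι b ∈ B) K w'
                + c * ((min ((Finset.univ.filter fun b => ι b ∈ B) ∩ A).card K : ℕ) : ℝ)) :=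
            expand.symm
        _ ≤ ∑ B : Finset α, Pw p B * bestSum (Finset.univ.filter fun b => ι b ∈ B) K w := step

lemma M2_eq {I J : Type*} [Fintype I] [Fintype J] (φ1 φ2 : Arc I J → ℝ) (K : I ⊕ J → ℕ)
    (x : Finset (Arc I J)) (hx : ∀ a ∈ x, ∃ e : I × J, a = Sum.inl e) :
    M2 φ1 φ2 K x = ∑ B : Finset (Arc I J),
      Pw (fun a => if a ∈ x then φ1 a else 0) B *
        ∑ j : J, bestSum (backlogJ B j) (K (Sum.inr j)) fun i => φ2 (Sum.inr (j, i)) := by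
  unfold M2
  refine Finset.sum_congr rfl fun B _ => ?_
  have hprob : probOf φ1 x B = Pw (fun a => if a ∈ x then φ1 a else 0) B := by
    unfold probOf Pw
    beta_reduce
    congr 1
    refine Finset.prod_congr ?_ fun a _ => rfl
    ext a
    simp
  rw [hprob]
  by_cases h0 : Pw (fun a => if a ∈ x then φ1 a else 0) B = 0
  · rw [h0, mul_zero, zero_mul]
  · have hBx : ∀ a ∈ B, a ∈ x := by
      intro a ha
      by_contra hax
      apply h0
      unfold Pw
      rw [Finset.prod_eq_zero ha (by simp [hax]), zero_mul]
    have hI : ∀ i : I, backlogI B i = ∅ := by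
      intro i
      ext j
      simp only [backlogI, Finset.mem_filter, Finset.mem_univ, true_and,
        Finset.notMem_empty, iff_false]
      intro hmem
      obtain ⟨e, he⟩ := hx _ (hBx _ hmem)
      exact absurd he (by simp)
    have hf : fval φ2 K B
        = ∑ j : J, bestSum (backlogJ B j) (K (Sum.inr j)) fun i => φ2 (Sum.inr (j, i)) := by
      unfold fval
      rw [Finset.sum_eq_zero fun i _ => by rw [hI i]; exact bestSum_empty _ _, zero_add]
    rw [hf, mul_comm]

/-- in the one-directional sequential design, an optimal solution of the
(restricted) DH relaxation achieves a `1 - 1/e` approximation guarantee. -/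
theorem DH_oneDirectional_guarantee
    {I J : Type*} [Fintype I] [Fintype J]
    (φ1 φ2 : Arc I J → ℝ)
    (hφ1 : ∀ a, 0 ≤ φ1 a ∧ φ1 a ≤ 1) (hφ2 : ∀ a, 0 ≤ φ2 a ∧ φ2 a ≤ 1)
    (K : I ⊕ J → ℕ)
    (xs : Finset (I × J)) (ys : J × I → ℝ)
    (hxs : ∀ i : I, (xs.filter fun e => e.1 = i).card ≤ K (Sum.inl i))
    (hys0 : ∀ q : J × I, 0 ≤ ys q ∧ ys q ≤ 1)
    (hys1 : ∀ (j : J) (i : I),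
      ys (j, i) ≤ φ1 (Sum.inl (i, j)) * (if (i, j) ∈ xs then 1 else 0))
    (hys2 : ∀ j : J, (∑ i : I, ys (j, i)) ≤ (K (Sum.inr j) : ℝ))
    (hopt : ∀ (x : Finset (I × J)) (y : J × I → ℝ),
      (∀ i : I, (x.filter fun e => e.1 = i).card ≤ K (Sum.inl i)) →
      (∀ q : J × I, 0 ≤ y q ∧ y q ≤ 1) →
      (∀ (j : J) (i : I),
        y (j, i) ≤ φ1 (Sum.inl (i, j)) * (if (i, j) ∈ x then 1 else 0)) →
      (∀ j : J, (∑ i : I, y (j, i)) ≤ (K (Sum.inr j) : ℝ)) →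
      (∑ q : J × I, φ2 (Sum.inr q) * y q) ≤ ∑ q : J × I, φ2 (Sum.inr q) * ys q) :
    ∀ x : Finset (Arc I J),
      (∀ a ∈ x, ∃ e : I × J, a = Sum.inl e) →
      (∀ i : I, outdegX x (Sum.inl i) ≤ K (Sum.inl i)) →
      (1 - (Real.exp 1)⁻¹) * M2 φ1 φ2 K x ≤
        M2 φ1 φ2 K (xs.image fun e => (Sum.inl e : Arc I J)) := by
  intro x hxinl hxdeg
  classical
  -- probabilities induced by the displayed set x
  set p : Arc I J → ℝ := fun a => if a ∈ x then φ1 a else 0 with hpdef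
  have hp : ∀ a, 0 ≤ p a ∧ p a ≤ 1 := by
    intro a
    simp only [hpdef]
    by_cases h : a ∈ x
    · simp only [if_pos h]; exact hφ1 a
    · simp only [if_neg h]; exact ⟨le_refl 0, zero_le_one⟩
  have hPw0 : ∀ B : Finset (Arc I J), 0 ≤ Pw p B := Pw_nonneg p hp
  -- choose optimal selections for each j and realized backlog B
  choose sel hsel1 hsel2 hsel3 using
    fun (j : J) (B : Finset (Arc I J)) =>
      bestSum_exists (backlogJ B j) (K (Sum.inr j)) (fun i => φ2 (Sum.inr (j, i)))
  obtain ⟨y, hyq⟩ : ∃ y : J × I → ℝ, ∀ q : J × I,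
      y q = ∑ B : Finset (Arc I J), Pw p B * (if q.2 ∈ sel q.1 B then 1 else 0) :=
    ⟨_, fun q => rfl⟩
  set x' : Finset (I × J) := Finset.univ.filter (fun e => Sum.inl e ∈ x) with hx'def
  have hx'mem : ∀ e : I × J, e ∈ x' ↔ Sum.inl e ∈ x := by
    intro e; rw [hx'def]; simp
  have hx'card : ∀ i : I, (x'.filter fun e => e.1 = i).card ≤ K (Sum.inl i) := by
    intro i
    refine le_trans ?_ (hxdeg i)
    unfold outdegX
    apply Finset.card_le_card_of_injOn (fun e => (Sum.inl e : Arc I J))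
    · intro e he
      rw [Finset.mem_coe, Finset.mem_filter] at he ⊢
      obtain ⟨he1, he2⟩ := he
      refine ⟨(hx'mem e).mp he1, ?_⟩
      obtain ⟨ei, ej⟩ := e
      simp only [arcSrc]
      simp only at he2
      rw [he2]
    · intro a _ b _ h
      simpa using h
  have hy0 : ∀ q : J × I, 0 ≤ y q ∧ y q ≤ 1 := by
    intro q
    constructor
    · rw [hyq q]
      refine Finset.sum_nonneg fun B _ => mul_nonneg (hPw0 B) ?_
      split <;> norm_num
    · rw [hyq q]
      calc ∑ B : Finset (Arc I J), Pw p B * (if q.2 ∈ sel q.1 B then (1:ℝ) else 0)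
          ≤ ∑ B : Finset (Arc I J), Pw p B := by
            refine Finset.sum_le_sum fun B _ => ?_
            have hle1 : (if q.2 ∈ sel q.1 B then (1:ℝ) else 0) ≤ 1 := by split <;> norm_num
            calc Pw p B * (if q.2 ∈ sel q.1 B then (1:ℝ) else 0)
                ≤ Pw p B * 1 := mul_le_mul_of_nonneg_left hle1 (hPw0 B)
              _ = Pw p B := mul_one _
        _ = 1 := sum_Pw p
  have hy1 : ∀ (j : J) (i : I),
      y (j, i) ≤ φ1 (Sum.inl (i, j)) * (if (i, j) ∈ x' then 1 else 0) := by
    intro j i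
    have hstep : y (j, i) ≤ p (Sum.inl (i, j)) := by
      simp only [hyq]
      calc ∑ B : Finset (Arc I J), Pw p B * (if i ∈ sel j B then (1:ℝ) else 0)
          ≤ ∑ B : Finset (Arc I J), Pw p B * (if Sum.inl (i, j) ∈ B then (1:ℝ) else 0) := by
            refine Finset.sum_le_sum fun B _ => ?_
            refine mul_le_mul_of_nonneg_left ?_ (hPw0 B)
            by_cases h : i ∈ sel j B
            · have hmem : Sum.inl (i, j) ∈ B := by
                have h2 := hsel1 j B h
                simp only [backlogJ, Finset.mem_filter, Finset.mem_univ, true_and] at h2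
                exact h2
              simp [h, hmem]
            · simp only [if_neg h]
              split <;> norm_num
        _ = p (Sum.inl (i, j)) := by
            rw [← marginal p (Sum.inl (i, j))]
            refine Finset.sum_congr rfl fun B _ => ?_
            by_cases hmem : Sum.inl (i, j) ∈ B <;> simp [hmem]
    by_cases h : (i, j) ∈ x'
    · rw [if_pos h, mul_one]
      have hxm : Sum.inl (i, j) ∈ x := (hx'mem _).mp h
      calc y (j, i) ≤ p (Sum.inl (i, j)) := hstep
        _ = φ1 (Sum.inl (i, j)) := by simp only [hpdef]; rw [if_pos hxm]
    · rw [if_neg h, mul_zero]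
      have hxm : Sum.inl (i, j) ∉ x := fun hc => h ((hx'mem _).mpr hc)
      calc y (j, i) ≤ p (Sum.inl (i, j)) := hstep
        _ = 0 := by simp only [hpdef]; rw [if_neg hxm]
  have hy2 : ∀ j : J, (∑ i : I, y (j, i)) ≤ (K (Sum.inr j) : ℝ) := by
    intro j
    have h1 : ∑ i : I, y (j, i)
        = ∑ B : Finset (Arc I J), Pw p B * ((sel j B).card : ℝ) := by
      have h0 : ∑ i : I, y (j, i) = ∑ i : I, ∑ B : Finset (Arc I J),
          Pw p B * (if i ∈ sel j B then (1:ℝ) else 0) := by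
        refine Finset.sum_congr rfl fun i _ => ?_
        rw [hyq (j, i)]
      rw [h0, Finset.sum_comm]
      refine Finset.sum_congr rfl fun B _ => ?_
      rw [← Finset.mul_sum]
      congr 1
      rw [Finset.sum_ite_mem, Finset.univ_inter, Finset.sum_const, nsmul_eq_mul, mul_one]
    rw [h1]
    calc ∑ B : Finset (Arc I J), Pw p B * ((sel j B).card : ℝ)
        ≤ ∑ B : Finset (Arc I J), Pw p B * (K (Sum.inr j) : ℝ) := by
          refine Finset.sum_le_sum fun B _ => mul_le_mul_of_nonneg_left ?_ (hPw0 B)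
          exact_mod_cast hsel2 j B
      _ = (K (Sum.inr j) : ℝ) := by rw [← Finset.sum_mul, sum_Pw, one_mul]
  have hObj : (∑ q : J × I, φ2 (Sum.inr q) * y q) = M2 φ1 φ2 K x := by
    rw [M2_eq φ1 φ2 K x hxinl, ← hpdef]
    have h1 : ∑ q : J × I, φ2 (Sum.inr q) * y q
        = ∑ q : J × I, ∑ B : Finset (Arc I J),
            Pw p B * (φ2 (Sum.inr q) * (if q.2 ∈ sel q.1 B then 1 else 0)) := by
      refine Finset.sum_congr rfl fun q _ => ?_
      have h2 : y q = ∑ B : Finset (Arc I J),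
          Pw p B * (if q.2 ∈ sel q.1 B then (1:ℝ) else 0) := hyq q
      rw [h2, Finset.mul_sum]
      exact Finset.sum_congr rfl fun B _ => by ring
    rw [h1, Finset.sum_comm]
    refine Finset.sum_congr rfl fun B _ => ?_
    rw [← Finset.mul_sum]
    congr 1
    rw [Fintype.sum_prod_type]
    refine Finset.sum_congr rfl fun j _ => ?_
    rw [hsel3 j B]
    have h3 : ∀ i : I, φ2 (Sum.inr (j, i)) * (if i ∈ sel j B then (1:ℝ) else 0)
        = (if i ∈ sel j B then φ2 (Sum.inr (j, i)) else 0) := fun i => by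
      split <;> ring
    rw [Finset.sum_congr rfl fun i _ => h3 i, Finset.sum_ite_mem, Finset.univ_inter]
  have hA := hopt x' y hx'card hy0 hy1 hy2
  -- Step B : lower bound on the optimal solution
  set p2 : Arc I J → ℝ :=
    fun a => if a ∈ xs.image (fun e => (Sum.inl e : Arc I J)) then φ1 a else 0 with hp2def
  have hp2 : ∀ a, 0 ≤ p2 a ∧ p2 a ≤ 1 := by
    intro a
    simp only [hp2def]
    by_cases h : a ∈ xs.image (fun e => (Sum.inl e : Arc I J))
    · simp only [if_pos h]; exact hφ1 a
    · simp only [if_neg h]; exact ⟨le_refl 0, zero_le_one⟩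
  have hstarinl : ∀ a ∈ xs.image (fun e => (Sum.inl e : Arc I J)), ∃ e : I × J, a = Sum.inl e := by
    intro a ha
    rw [Finset.mem_image] at ha
    obtain ⟨e, _, rfl⟩ := ha
    exact ⟨e, rfl⟩
  have hstar : M2 φ1 φ2 K (xs.image fun e => (Sum.inl e : Arc I J))
      = ∑ B : Finset (Arc I J), Pw p2 B *
          ∑ j : J, bestSum (backlogJ B j) (K (Sum.inr j)) fun i => φ2 (Sum.inr (j, i)) := by
    rw [M2_eq _ _ _ _ hstarinl, ← hp2def]
  have hBj : ∀ j : J,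
      (1 - (Real.exp 1)⁻¹) * (∑ i : I, φ2 (Sum.inr (j, i)) * ys (j, i)) ≤
        ∑ B : Finset (Arc I J), Pw p2 B *
          bestSum (backlogJ B j) (K (Sum.inr j)) (fun i => φ2 (Sum.inr (j, i))) := by
    intro j
    have hinj : Function.Injective (fun i : I => (Sum.inl (i, j) : Arc I J)) := by
      intro a b h; simpa using h
    have hy' : ∀ i : I, 0 ≤ ys (j, i) ∧ ys (j, i) ≤ p2 (Sum.inl (i, j)) := by
      intro i
      refine ⟨(hys0 (j, i)).1, ?_⟩
      have h := hys1 j i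
      simp only [hp2def]
      by_cases hm : (i, j) ∈ xs
      · have hin : (Sum.inl (i, j) : Arc I J) ∈ xs.image (fun e => (Sum.inl e : Arc I J)) :=
          Finset.mem_image_of_mem _ hm
        rw [if_pos hin]
        simpa [hm] using h
      · have hnot : (Sum.inl (i, j) : Arc I J) ∉ xs.image (fun e => (Sum.inl e : Arc I J)) := by
          rw [Finset.mem_image]
          rintro ⟨e, he, heq⟩
          have he2 : e = (i, j) := by simpa using heq
          subst he2
          exact hm he
        rw [if_neg hnot]
        simpa [hm] using h
    have hcg := corr_gap (fun i : I => (Sum.inl (i, j) : Arc I J)) hinj p2 hp2 (K (Sum.inr j))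
      (Finset.univ.filter fun i : I => φ2 (Sum.inr (j, i)) ≠ 0).card
      (fun i => φ2 (Sum.inr (j, i))) (le_refl _) (fun i => (hφ2 _).1)
      (fun i => ys (j, i)) hy' (hys2 j)
    refine le_trans hcg (le_of_eq (Finset.sum_congr rfl fun B _ => ?_))
    refine congrArg (fun S : Finset I =>
      Pw p2 B * bestSum S (K (Sum.inr j)) fun i => φ2 (Sum.inr (j, i))) ?_
    ext i
    simp [backlogJ]
  have hBtot : (1 - (Real.exp 1)⁻¹) * (∑ q : J × I, φ2 (Sum.inr q) * ys q) ≤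
      M2 φ1 φ2 K (xs.image fun e => (Sum.inl e : Arc I J)) := by
    rw [hstar]
    have hswap : ∑ B : Finset (Arc I J), Pw p2 B *
          ∑ j : J, bestSum (backlogJ B j) (K (Sum.inr j)) (fun i => φ2 (Sum.inr (j, i)))
        = ∑ j : J, ∑ B : Finset (Arc I J), Pw p2 B *
            bestSum (backlogJ B j) (K (Sum.inr j)) (fun i => φ2 (Sum.inr (j, i))) := by
      calc ∑ B : Finset (Arc I J), Pw p2 B *
            ∑ j : J, bestSum (backlogJ B j) (K (Sum.inr j)) (fun i => φ2 (Sum.inr (j, i)))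
          = ∑ B : Finset (Arc I J), ∑ j : J, Pw p2 B *
              bestSum (backlogJ B j) (K (Sum.inr j)) (fun i => φ2 (Sum.inr (j, i))) :=
            Finset.sum_congr rfl fun B _ => Finset.mul_sum _ _ _
        _ = _ := Finset.sum_comm
    rw [hswap, Fintype.sum_prod_type, Finset.mul_sum]
    exact Finset.sum_le_sum fun j _ => hBj j
  have he1 : (0:ℝ) ≤ 1 - (Real.exp 1)⁻¹ := by
    have h2 : (2:ℝ) ≤ Real.exp 1 := by
      have := Real.add_one_le_exp 1
      linarith
    have h3 : (0:ℝ) < Real.exp 1 := Real.exp_pos 1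
    have h4 : (Real.exp 1)⁻¹ ≤ 1 := by
      rw [inv_eq_one_div, div_le_one h3]
      linarith
    linarith
  calc (1 - (Real.exp 1)⁻¹) * M2 φ1 φ2 K x
      = (1 - (Real.exp 1)⁻¹) * ∑ q : J × I, φ2 (Sum.inr q) * y q := by rw [hObj]
    _ ≤ (1 - (Real.exp 1)⁻¹) * ∑ q : J × I, φ2 (Sum.inr q) * ys q :=
        mul_le_mul_of_nonneg_left hA he1
    _ ≤ M2 φ1 φ2 K (xs.image fun e => (Sum.inl e : Arc I J)) := hBtot
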